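/- Let X be a reflexive real Banach space, let f ∈ Γ(X), and let x̄ ∈ X, ȳ* ∈ X* with ȳ* ∈ ∂f(x̄). Then ∂f has the isolated calmness property at x̄ for ȳ* if and only if there exist a neighborhood V of ȳ* in X* and a constant c > 0 such that f*(y*) ≥ f*(ȳ*) + ⟨y* − ȳ*, x̄⟩ + c·‖y* − ȳ*‖² for all y* ∈ V. Specifically, if ∂f has the isolated calmness property at x̄ for ȳ* with constant κ, then the conjugate growth condition holds for every c < 1/(4κ); conversely, if the conjugate growth condition holds with constant c, then ∂f has the isolated calmness property at x̄ for ȳ* with constant 1/c. -/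

import Mathlib

open Topology Filter Metric Set

/-- The convex subdifferential of an extended-real-valued function `f` at `x`. -/
noncomputable def subdiff {X : Type*} [NormedAddCommGroup X] [NormedSpace ℝ X]
    (f : X → EReal) (x : X) : Set (X →L[ℝ] ℝ) :=
  {p | f x ≠ ⊤ ∧ ∀ z : X, f x + ((p (z - x) : ℝ) : EReal) ≤ f z}

/-- The Fenchel conjugate `f*(p) = sup_x (⟨p, x⟩ - f(x))`. -/
noncomputable def fenchel {X : Type*} [NormedAddCommGroup X] [NormedSpace ℝ X]
    (f : X → EReal) (p : X →L[ℝ] ℝ) : EReal :=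
  ⨆ x : X, (((p x : ℝ) : EReal) - f x)

/-- `∂f` has the isolated calmness property at `x̄` for `ȳ*` with constant `κ`: there are
neighborhoods `U` of `x̄` and `V` of `ȳ*` with `‖y* - ȳ*‖ ≤ κ·‖x - x̄‖` for all `x ∈ U`
and `y* ∈ ∂f(x) ∩ V`. -/
def IsolatedCalmAt {X : Type*} [NormedAddCommGroup X] [NormedSpace ℝ X]
    (f : X → EReal) (xbar : X) (ybar : X →L[ℝ] ℝ) (κ : ℝ) : Prop :=
  ∃ U ∈ 𝓝 xbar, ∃ V ∈ 𝓝 ybar, ∀ x ∈ U, ∀ y ∈ subdiff f x, y ∈ V →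
    ‖y - ybar‖ ≤ κ * ‖x - xbar‖

/-- The conjugate quadratic growth condition with constant `c` on some neighborhood `V` of
`ȳ*`: `f*(y*) ≥ f*(ȳ*) + ⟨y* - ȳ*, x̄⟩ + c·‖y* - ȳ*‖²` for all `y* ∈ V`. -/
def ConjIsolGrowth {X : Type*} [NormedAddCommGroup X] [NormedSpace ℝ X]
    (f : X → EReal) (xbar : X) (ybar : X →L[ℝ] ℝ) (c : ℝ) : Prop :=
  ∃ V ∈ 𝓝 ybar, ∀ y ∈ V,
    fenchel f ybar + (((y - ybar) xbar + c * ‖y - ybar‖ ^ 2 : ℝ) : EReal) ≤ fenchel f y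

section AuxLemmas

lemma coe_sub_top' (r : ℝ) : ((r : ℝ) : EReal) - ⊤ = ⊥ := rfl

lemma ereal_add_coe_le_coe_iff (A : EReal) (d t : ℝ) :
    A + (d : EReal) ≤ (t : EReal) ↔ A ≤ ((t - d : ℝ) : EReal) := by
  induction A using EReal.rec with
  | bot => simp
  | coe a =>
    rw [← EReal.coe_add, EReal.coe_le_coe_iff, EReal.coe_le_coe_iff]
    constructor <;> intro <;> linarith
  | top =>
    rw [EReal.top_add_coe]
    constructor
    · intro h; exact absurd (top_le_iff.mp h) (EReal.coe_ne_top _)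
    · intro h; exact absurd (top_le_iff.mp h) (EReal.coe_ne_top _)
lemma coe_le_ereal_add_coe_iff (A : EReal) (d t : ℝ) :
    (t : EReal) ≤ A + (d : EReal) ↔ ((t - d : ℝ) : EReal) ≤ A := by
  induction A using EReal.rec with
  | bot =>
    rw [EReal.bot_add]
    constructor
    · intro h; exact absurd (le_bot_iff.mp h) (EReal.coe_ne_bot _)
    · intro h; exact absurd (le_bot_iff.mp h) (EReal.coe_ne_bot _)
  | coe a =>
    rw [← EReal.coe_add, EReal.coe_le_coe_iff, EReal.coe_le_coe_iff]
    constructor <;> intro <;> linarith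
  | top => simp [EReal.top_add_coe]
lemma coe_lt_ereal_add_coe_iff (A : EReal) (d t : ℝ) :
    (t : EReal) < A + (d : EReal) ↔ ((t - d : ℝ) : EReal) < A := by
  induction A using EReal.rec with
  | bot => simp
  | coe a =>
    rw [← EReal.coe_add, EReal.coe_lt_coe_iff, EReal.coe_lt_coe_iff]
    constructor <;> intro <;> linarith
  | top =>
    rw [EReal.top_add_coe]
    constructor
    · intro _; exact EReal.coe_lt_top _
    · intro _; exact EReal.coe_lt_top _
lemma ereal_add_coe_eq_coe_iff (A : EReal) (d t : ℝ) :
    A + (d : EReal) = (t : EReal) ↔ A = ((t - d : ℝ) : EReal) := by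
  constructor
  · intro h
    exact le_antisymm ((ereal_add_coe_le_coe_iff A d t).mp h.le)
      ((coe_le_ereal_add_coe_iff A d t).mp h.ge)
  · rintro rfl
    rw [← EReal.coe_add]
    norm_num

lemma fenchel_subdiff_eq {X : Type*} [NormedAddCommGroup X] [NormedSpace ℝ X]
    (f : X → EReal) (hne_bot : ∀ x, f x ≠ ⊥) (x : X) (y : X →L[ℝ] ℝ)
    (hy : y ∈ subdiff f x) (rx : ℝ) (hrx : f x = (rx : EReal)) :
    fenchel f y = ((y x - rx : ℝ) : EReal) := by
  apply le_antisymm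
  · refine iSup_le fun v => ?_
    rcases eq_or_ne (f v) ⊤ with htop | hne
    · rw [htop, coe_sub_top']; exact bot_le
    · obtain ⟨rv, hrv⟩ : ∃ rv : ℝ, f v = (rv : EReal) :=
        ⟨(f v).toReal, (EReal.coe_toReal hne (hne_bot v)).symm⟩
      have h2 := hy.2 v
      rw [hrx, hrv, ← EReal.coe_add, EReal.coe_le_coe_iff] at h2
      rw [hrv, ← EReal.coe_sub, EReal.coe_le_coe_iff]
      have h3 : y (v - x) = y v - y x := map_sub _ _ _
      linarith [h2, h3.symm.le, h3.le]
  · have h1 : (((y x : ℝ) : EReal) - f x) ≤ fenchel f y :=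
      le_iSup (fun v : X => (((y v : ℝ) : EReal) - f v)) x
    rw [hrx, ← EReal.coe_sub] at h1
    exact h1


lemma myEkeland {α : Type*} [MetricSpace α] [CompleteSpace α]
    (G : α → ℝ) (hG : LowerSemicontinuous G) (b : ℝ) (hb : ∀ w, b ≤ G w)
    (y : α) (r : ℝ) (hr : 0 < r) :
    ∃ z, G z ≤ G y ∧ r * dist z y ≤ G y - G z ∧ ∀ w, G z - r * dist w z ≤ G w := by
  set S : α → Set α := fun v => {w | G w + r * dist w v ≤ G v} with hS
  have hSelf : ∀ v, v ∈ S v := by intro v; simp [hS]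
  have hTrans : ∀ v w u, w ∈ S v → u ∈ S w → u ∈ S v := by
    intro v w u hw hu
    simp only [hS, mem_setOf_eq] at *
    have := dist_triangle u w v
    nlinarith [dist_nonneg (x := u) (y := w)]
  have hBdd : ∀ v, BddBelow (G '' S v) := by
    intro v
    exact ⟨b, by rintro t ⟨u, _, rfl⟩; exact hb u⟩
  have key : ∀ (v : α) (n : ℕ), ∃ w, w ∈ S v ∧ G w ≤ sInf (G '' S v) + (1/2)^n := by
    intro v n
    have hne : (G '' S v).Nonempty := ⟨G v, v, hSelf v, rfl⟩
    have hlt : sInf (G '' S v) < sInf (G '' S v) + (1/2)^n := by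
      have : (0:ℝ) < (1/2)^n := by positivity
      linarith
    obtain ⟨t, ⟨w, hw, rfl⟩, htlt⟩ := exists_lt_of_csInf_lt hne hlt
    exact ⟨w, hw, htlt.le⟩
  obtain ⟨x, hx0, hxS, hxI⟩ : ∃ x : ℕ → α, x 0 = y ∧ (∀ n, x (n+1) ∈ S (x n)) ∧
      (∀ n, G (x (n+1)) ≤ sInf (G '' S (x n)) + (1/2)^n) := by
    refine ⟨fun n => Nat.rec y (fun n xn => Classical.choose (key xn n)) n, rfl, ?_, ?_⟩
    · intro n; exact (Classical.choose_spec (key _ n)).1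
    · intro n; exact (Classical.choose_spec (key _ n)).2
  -- chain membership
  have hchain : ∀ n m, n ≤ m → x m ∈ S (x n) := by
    intro n m hnm
    induction m, hnm using Nat.le_induction with
    | base => exact hSelf _
    | succ m hnm ih => exact hTrans _ _ _ ih (hxS m)
  have hmono : ∀ n m, n ≤ m → G (x m) ≤ G (x n) := by
    intro n m h
    have := hchain n m h
    simp only [hS, mem_setOf_eq] at this
    nlinarith [dist_nonneg (x := x m) (y := x n)]
  -- limit of G (x n)
  have hbdd : BddBelow (range fun n => G (x n)) := ⟨b, by rintro t ⟨n, rfl⟩; exact hb _⟩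
  set L := ⨅ n, G (x n) with hL
  have hGL : Tendsto (fun n => G (x n)) atTop (𝓝 L) :=
    tendsto_atTop_ciInf (fun n m h => hmono n m h) hbdd
  have hLle : ∀ n, L ≤ G (x n) := fun n => ciInf_le hbdd n
  -- Cauchy
  have hdist : ∀ n m, n ≤ m → r * dist (x m) (x n) ≤ G (x n) - G (x m) := by
    intro n m h
    have := hchain n m h
    simp only [hS, mem_setOf_eq] at this
    linarith
  have hcauchy : CauchySeq x := by
    refine cauchySeq_of_le_tendsto_0 (fun N => 2 * (G (x N) - L) / r) ?_ ?_
    · intro n m N hn hm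
      have h1 := hdist N n hn
      have h2 := hdist N m hm
      have h3 := dist_triangle (x n) (x N) (x m)
      have h4 := hLle n
      have h5 := hLle m
      rw [dist_comm (x N) (x m)] at h3
      rw [le_div_iff₀ hr]
      nlinarith [dist_nonneg (x := x n) (y := x m)]
    · have h0 : Tendsto (fun N => G (x N) - L) atTop (𝓝 (L - L)) :=
        hGL.sub tendsto_const_nhds
      rw [sub_self] at h0
      have : Tendsto (fun N => G (x N) - L) atTop (𝓝 0) := h0
      have := (this.const_mul 2).div_const r
      simpa using this
  obtain ⟨z, hz⟩ := cauchySeq_tendsto_of_complete hcauchy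
  -- G z ≤ L
  have hGzL : G z ≤ L := by
    by_contra h
    push_neg at h
    obtain ⟨c, hc1, hc2⟩ := exists_between h
    have hev : ∀ᶠ m in atTop, c < G (x m) := hz.eventually (hG z c hc2)
    have : c ≤ L := ge_of_tendsto hGL (hev.mono fun m hm => hm.le)
    linarith
  -- z ∈ S (x n)
  have hzS : ∀ n, G z + r * dist z (x n) ≤ G (x n) := by
    intro n
    have hd : Tendsto (fun m => r * dist (x m) (x n)) atTop (𝓝 (r * dist z (x n))) :=
      ((hz.dist tendsto_const_nhds)).const_mul r
    have hle : r * dist z (x n) ≤ G (x n) - L := by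
      refine le_of_tendsto hd ?_
      filter_upwards [eventually_ge_atTop n] with m hm
      have := hdist n m hm
      have := hLle m
      linarith
    linarith
  refine ⟨z, ?_, ?_, ?_⟩
  · have := hzS 0; rw [hx0] at this; nlinarith [dist_nonneg (x := z) (y := y)]
  · have := hzS 0; rw [hx0] at this; linarith
  · intro w
    by_cases hw : G w + r * dist w z ≤ G z
    · -- w ∈ S z hence w ∈ S (x n) for all n
      have hwS : ∀ n, w ∈ S (x n) := by
        intro n
        refine hTrans _ z _ ?_ hw
        exact hzS n
      have hGwL : L ≤ G w := by
        have h1 : ∀ n, G (x (n+1)) - (1/2)^n ≤ G w := by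
          intro n
          have : sInf (G '' S (x n)) ≤ G w := csInf_le (hBdd _) ⟨w, hwS n, rfl⟩
          have := hxI n
          linarith [csInf_le (hBdd (x n)) (⟨w, hwS n, rfl⟩ : G w ∈ G '' S (x n))]
        have htend : Tendsto (fun n => G (x (n+1)) - (1/2:ℝ)^n) atTop (𝓝 (L - 0)) := by
          refine Tendsto.sub ?_ ?_
          · exact hGL.comp (tendsto_add_atTop_nat 1)
          · exact tendsto_pow_atTop_nhds_zero_of_lt_one (by norm_num) (by norm_num)
        have := le_of_tendsto htend (Eventually.of_forall h1)
        simpa using this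
      have hd0 : dist w z = 0 := by
        have h1 : r * dist w z ≤ 0 := by linarith
        have := dist_nonneg (x := w) (y := z)
        nlinarith
      rw [hd0]
      linarith
    · push_neg at hw
      nlinarith [dist_nonneg (x := w) (y := z)]


lemma exists_subgrad {E : Type*} [NormedAddCommGroup E] [NormedSpace ℝ E]
    (g : E → EReal)
    (hconv : ∀ w₁ w₂ : E, ∀ t₁ t₂ a b : ℝ, g w₁ ≤ (t₁ : EReal) → g w₂ ≤ (t₂ : EReal) →
      0 ≤ a → 0 ≤ b → a + b = 1 → g (a • w₁ + b • w₂) ≤ ((a * t₁ + b * t₂ : ℝ) : EReal))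
    (z : E) (gz ρ : ℝ) (hgz : g z = (gz : EReal)) (hρ : 0 ≤ ρ)
    (hmin : ∀ w, ((gz - ρ * ‖w - z‖ : ℝ) : EReal) ≤ g w) :
    ∃ p : E →L[ℝ] ℝ, ‖p‖ ≤ ρ ∧ ∀ w, ((gz + p (w - z) : ℝ) : EReal) ≤ g w := by
  set B : Set (E × ℝ) := {q | q.2 < gz - ρ * ‖q.1 - z‖} with hB
  set A : Set (E × ℝ) := {q | g q.1 ≤ (q.2 : EReal)} with hA
  have hBopen : IsOpen B := by
    have hc : Continuous fun q : E × ℝ => gz - ρ * ‖q.1 - z‖ - q.2 := by fun_prop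
    have heq : B = (fun q : E × ℝ => gz - ρ * ‖q.1 - z‖ - q.2) ⁻¹' (Ioi 0) := by
      ext q
      simp only [hB, mem_setOf_eq, mem_preimage, mem_Ioi]
      constructor <;> intro h <;> linarith
    rw [heq]
    exact isOpen_Ioi.preimage hc
  have hBconv : Convex ℝ B := by
    rintro ⟨w₁, t₁⟩ h₁ ⟨w₂, t₂⟩ h₂ a b ha hb hab
    simp only [hB, mem_setOf_eq] at h₁ h₂ ⊢
    rcases eq_or_lt_of_le ha with rfl | ha'
    · simp only [zero_add] at hab; subst hab; simpa using h₂
    rcases eq_or_lt_of_le hb with rfl | hb'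
    · simp only [add_zero] at hab; subst hab; simpa using h₁
    have hnorm : ‖a • w₁ + b • w₂ - z‖ ≤ a * ‖w₁ - z‖ + b * ‖w₂ - z‖ := by
      have hrw : a • w₁ + b • w₂ - z = a • (w₁ - z) + b • (w₂ - z) := by
        match_scalars <;> linarith
      rw [hrw]
      calc ‖a • (w₁ - z) + b • (w₂ - z)‖ ≤ ‖a • (w₁ - z)‖ + ‖b • (w₂ - z)‖ := norm_add_le _ _
        _ = a * ‖w₁ - z‖ + b * ‖w₂ - z‖ := by
            rw [norm_smul, norm_smul, Real.norm_of_nonneg ha, Real.norm_of_nonneg hb]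
    simp only [Prod.smul_mk, Prod.mk_add_mk, smul_eq_mul]
    have hgzab : a * gz + b * gz = gz := by rw [← add_mul, hab, one_mul]
    nlinarith [mul_lt_mul_of_pos_left h₁ ha', mul_lt_mul_of_pos_left h₂ hb',
      mul_le_mul_of_nonneg_left hnorm hρ]
  have hAconv : Convex ℝ A := by
    rintro ⟨w₁, t₁⟩ h₁ ⟨w₂, t₂⟩ h₂ a b ha hb hab
    simp only [hA, mem_setOf_eq] at h₁ h₂ ⊢
    exact hconv w₁ w₂ t₁ t₂ a b h₁ h₂ ha hb hab
  have hdisj : Disjoint B A := by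
    rw [Set.disjoint_left]
    rintro ⟨w, t⟩ hqB hqA
    simp only [hB, hA, mem_setOf_eq] at hqB hqA
    have h1 := (hmin w).trans hqA
    rw [EReal.coe_le_coe_iff] at h1
    linarith
  obtain ⟨φ, u, hBs, hAs⟩ := geometric_hahn_banach_open hBconv hBopen hAconv hdisj
  set q0 : E →L[ℝ] ℝ := φ.comp (ContinuousLinearMap.inl ℝ E ℝ) with hq0
  set s : ℝ := φ (0, 1) with hs
  have hφ : ∀ (w : E) (t : ℝ), φ (w, t) = q0 w + t * s := by
    intro w t
    have h : ((w, t) : E × ℝ) = (w, 0) + t • ((0 : E), (1 : ℝ)) := by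
      simp [Prod.ext_iff]
    rw [h, map_add, map_smul]
    simp [hq0, hs, smul_eq_mul]
  have hzA : ((z, gz) : E × ℝ) ∈ A := by simp [hA, hgz]
  have hA1 : u ≤ q0 z + gz * s := by have := hAs _ hzA; rwa [hφ] at this
  have hB1 : ∀ w : E, q0 w + (gz - ρ * ‖w - z‖) * s ≤ u := by
    intro w
    set X := gz - ρ * ‖w - z‖ with hX
    have hev : ∀ ε : ℝ, 0 < ε → q0 w + (X - ε) * s < u := by
      intro ε hε
      have hmem : ((w, X - ε) : E × ℝ) ∈ B := by
        simp only [hB, mem_setOf_eq]; rw [← hX]; linarith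
      have := hBs _ hmem
      rwa [hφ] at this
    by_contra hcon
    push_neg at hcon
    rcases le_or_gt s 0 with hs0 | hs0
    · have h1 := hev 1 one_pos
      have hexp : (X - 1) * s = X * s - s := by ring
      rw [hexp] at h1
      linarith
    · have hd : (0:ℝ) < (q0 w + X * s - u) / s := div_pos (by linarith) hs0
      have h1 := hev _ hd
      have hexp : (X - (q0 w + X * s - u) / s) * s = X * s - (q0 w + X * s - u) := by
        field_simp
      rw [hexp] at h1
      linarith
  have hs0 : 0 < s := by
    rcases lt_trichotomy s 0 with h | h | h
    · exfalso
      set t := max gz ((u - q0 z) / s + 1) with ht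
      have htgz : gz ≤ t := le_max_left _ _
      have htA : ((z, t) : E × ℝ) ∈ A := by
        have hh : g z ≤ (t : EReal) := by rw [hgz]; exact_mod_cast htgz
        exact hh
      have h2 := hAs _ htA
      rw [hφ] at h2
      have h3 : (u - q0 z) / s + 1 ≤ t := le_max_right _ _
      have h4 : t * s ≤ ((u - q0 z) / s + 1) * s := mul_le_mul_of_nonpos_right h3 h.le
      have hsne : s ≠ 0 := ne_of_lt h
      have h5 : ((u - q0 z) / s + 1) * s = (u - q0 z) + s := by
        field_simp
      rw [h5] at h4
      linarith
    · exfalso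
      have hBz : ((z, gz - 1) : E × ℝ) ∈ B := by
        simp only [hB, mem_setOf_eq, sub_self, norm_zero, mul_zero, sub_zero]
        linarith
      have h2 := hBs _ hBz
      rw [hφ, h] at h2
      rw [h] at hA1
      simp at h2 hA1
      linarith
    · exact h
  refine ⟨(-(s⁻¹)) • q0, ?_, ?_⟩
  · have hbound : ∀ v : E, q0 v ≤ ρ * s * ‖v‖ := by
      intro v
      have h1 := hB1 (z + v)
      have h2 : q0 (z + v) = q0 z + q0 v := map_add _ _ _
      simp only [add_sub_cancel_left] at h1
      nlinarith
    have hq0norm : ‖q0‖ ≤ ρ * s := by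
      apply ContinuousLinearMap.opNorm_le_bound _ (by positivity)
      intro v
      rw [Real.norm_eq_abs, abs_le]
      constructor
      · have := hbound (-v); simp only [map_neg, norm_neg] at this; linarith
      · exact hbound v
    apply ContinuousLinearMap.opNorm_le_bound _ hρ
    intro v
    rw [ContinuousLinearMap.smul_apply, smul_eq_mul, Real.norm_eq_abs, abs_mul,
      abs_neg, abs_inv, abs_of_pos hs0]
    have habs : |q0 v| ≤ ρ * s * ‖v‖ := by
      rw [abs_le]
      constructor
      · have := hbound (-v); simp only [map_neg, norm_neg] at this; linarith
      · exact hbound v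
    have h6 : s⁻¹ * |q0 v| ≤ s⁻¹ * (ρ * s * ‖v‖) :=
      mul_le_mul_of_nonneg_left habs (by positivity)
    have h7 : s⁻¹ * (ρ * s * ‖v‖) = ρ * ‖v‖ := by
      field_simp
    linarith
  · intro w
    have hwbot : (⊥ : EReal) < g w := lt_of_lt_of_le (EReal.bot_lt_coe _) (hmin w)
    rcases eq_or_ne (g w) ⊤ with htop | hne
    · rw [htop]; exact le_top
    · obtain ⟨t, ht⟩ : ∃ t : ℝ, g w = (t : EReal) := ⟨(g w).toReal, (EReal.coe_toReal hne hwbot.ne').symm⟩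
      have htA : ((w, t) : E × ℝ) ∈ A := by simp [hA, ht]
      have h2 := hAs _ htA
      rw [hφ] at h2
      have h3 : q0 z + gz * s ≤ u := by
        have := hB1 z; simpa using this
      have h4 : q0 z + gz * s ≤ q0 w + t * s := le_trans h3 h2
      rw [ht, EReal.coe_le_coe_iff]
      have happ : ((-(s⁻¹)) • q0) (w - z) = -(s⁻¹) * (q0 w - q0 z) := by
        rw [ContinuousLinearMap.smul_apply, map_sub, smul_eq_mul]
      rw [happ, ← sub_nonneg]
      have h5 : 0 ≤ (t - (gz + -s⁻¹ * (q0 w - q0 z))) * s := by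
        have hsne : s ≠ 0 := ne_of_gt hs0
        have hexp : (t - (gz + -s⁻¹ * (q0 w - q0 z))) * s
            = (q0 w + t * s) - (q0 z + gz * s) := by
          field_simp
          ring
        rw [hexp]; linarith
      have h6 : (0:ℝ) * s ≤ (t - (gz + -s⁻¹ * (q0 w - q0 z))) * s := by linarith
      exact le_of_mul_le_mul_right (by linarith [h6]) hs0


lemma fm_subdiff {X : Type*} [NormedAddCommGroup X] [NormedSpace ℝ X]
    (f : X → EReal) (hproper : ∃ x, f x ≠ ⊤) (hne_bot : ∀ x, f x ≠ ⊥)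
    (hlsc : LowerSemicontinuous f)
    (hconvE : ∀ x₁ x₂ : X, ∀ t₁ t₂ a b : ℝ, f x₁ ≤ (t₁ : EReal) → f x₂ ≤ (t₂ : EReal) →
      0 ≤ a → 0 ≤ b → a + b = 1 → f (a • x₁ + b • x₂) ≤ ((a * t₁ + b * t₂ : ℝ) : EReal))
    (z : X →L[ℝ] ℝ) (fz : ℝ) (hfz : fenchel f z = (fz : EReal))
    (x : X) (hx : ∀ w : X →L[ℝ] ℝ, ((fz + (w - z) x : ℝ) : EReal) ≤ fenchel f w) :
    z ∈ subdiff f x := by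
  -- term bound for z
  have hterm : ∀ (v : X) (rv : ℝ), f v = (rv : EReal) → z v - rv ≤ fz := by
    intro v rv hrv
    have h1 : (((z v : ℝ) : EReal) - f v) ≤ fenchel f z :=
      le_iSup (fun v : X => (((z v : ℝ) : EReal) - f v)) v
    rw [hrv, hfz, ← EReal.coe_sub, EReal.coe_le_coe_iff] at h1
    exact h1
  set μ : ℝ := z x - fz with hμ
  -- Step A : f x ≤ μ
  have hstepA : f x ≤ ((μ : ℝ) : EReal) := by
    by_contra hgt
    push_neg at hgt
    set epi : Set (X × ℝ) := {q | f q.1 ≤ (q.2 : EReal)} with hepi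
    have hepi_closed : IsClosed epi := by
      rw [← isOpen_compl_iff, isOpen_iff_mem_nhds]
      rintro ⟨v, t⟩ hvt
      simp only [hepi, mem_compl_iff, mem_setOf_eq, not_le] at hvt
      obtain ⟨c, hc1, hc2⟩ := exists_between hvt
      have hcne : c ≠ ⊤ := by
        rintro rfl
        exact not_top_lt hc2
      have hcne' : c ≠ ⊥ := by
        rintro rfl
        exact not_lt_bot hc1
      set c' := c.toReal with hc'
      have hcc : (c' : EReal) = c := EReal.coe_toReal hcne hcne'
      have h1 : ∀ᶠ v' in 𝓝 v, c < f v' := hlsc v c hc2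
      have htc : t < c' := by
        rw [← hcc] at hc1
        exact_mod_cast hc1
      rw [nhds_prod_eq]
      refine mem_of_superset (Filter.prod_mem_prod h1 (Iio_mem_nhds htc)) ?_
      rintro ⟨v', t'⟩ ⟨hv', ht'⟩
      simp only [hepi, mem_compl_iff, mem_setOf_eq, not_le]
      refine lt_trans ?_ hv'
      rw [← hcc]
      exact_mod_cast ht'
    have hepi_conv : Convex ℝ epi := by
      rintro ⟨w₁, t₁⟩ h₁ ⟨w₂, t₂⟩ h₂ a b ha hb hab
      simp only [hepi, mem_setOf_eq] at h₁ h₂ ⊢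
      exact hconvE w₁ w₂ t₁ t₂ a b h₁ h₂ ha hb hab
    have hxnot : ((x, μ) : X × ℝ) ∉ epi := by
      simp only [hepi, mem_setOf_eq, not_le]
      exact hgt
    obtain ⟨ψ, u, hepis, hxu⟩ := geometric_hahn_banach_closed_point hepi_conv hepi_closed hxnot
    set q0 : X →L[ℝ] ℝ := ψ.comp (ContinuousLinearMap.inl ℝ X ℝ) with hq0
    set s : ℝ := ψ (0, 1) with hs
    have hψ : ∀ (v : X) (t : ℝ), ψ (v, t) = q0 v + t * s := by
      intro v t
      have h : ((v, t) : X × ℝ) = (v, 0) + t • ((0 : X), (1 : ℝ)) := by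
        simp [Prod.ext_iff]
      rw [h, map_add, map_smul]
      simp [hq0, hs, smul_eq_mul]
    have hxside : u < q0 x + μ * s := by
      have := hxu; rwa [hψ] at this
    -- dom f terms
    have hdom : ∀ (v : X) (rv : ℝ), f v = (rv : EReal) → q0 v + rv * s < u := by
      intro v rv hrv
      have : ((v, rv) : X × ℝ) ∈ epi := by
        simp only [hepi, mem_setOf_eq, hrv]; exact le_refl _
      have := hepis _ this
      rwa [hψ] at this
    obtain ⟨v₀, hv₀⟩ := hproper
    obtain ⟨r₀, hr₀⟩ : ∃ r₀ : ℝ, f v₀ = (r₀ : EReal) :=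
      ⟨(f v₀).toReal, (EReal.coe_toReal hv₀ (hne_bot v₀)).symm⟩
    -- s ≤ 0
    have hsle : s ≤ 0 := by
      by_contra hpos
      push_neg at hpos
      set t := max r₀ ((u - q0 v₀) / s + 1) with ht
      have htmem : ((v₀, t) : X × ℝ) ∈ epi := by
        simp only [hepi, mem_setOf_eq, hr₀]
        exact_mod_cast le_max_left _ _
      have h2 := hepis _ htmem
      rw [hψ] at h2
      have h3 : (u - q0 v₀) / s + 1 ≤ t := le_max_right _ _
      have hsne : s ≠ 0 := ne_of_gt hpos
      have h4 : ((u - q0 v₀) / s + 1) * s ≤ t * s := mul_le_mul_of_nonneg_right h3 hpos.le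
      have h5 : ((u - q0 v₀) / s + 1) * s = (u - q0 v₀) + s := by
        field_simp
      rw [h5] at h4
      linarith
    rcases eq_or_lt_of_le hsle with hs0 | hs0
    · -- s = 0
      set w := z + q0 with hw
      have hfw : fenchel f w ≤ ((fz + u : ℝ) : EReal) := by
        refine iSup_le fun v => ?_
        rcases eq_or_ne (f v) ⊤ with htop | hne
        · rw [htop, coe_sub_top']
          exact bot_le
        · obtain ⟨rv, hrv⟩ : ∃ rv : ℝ, f v = (rv : EReal) :=
            ⟨(f v).toReal, (EReal.coe_toReal hne (hne_bot v)).symm⟩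
          rw [hrv, ← EReal.coe_sub, EReal.coe_le_coe_iff]
          have h1 := hterm v rv hrv
          have h2 := hdom v rv hrv
          rw [hs0, mul_zero, add_zero] at h2
          have hwv : w v = z v + q0 v := rfl
          rw [hwv]
          linarith
      have h3 := (hx w).trans hfw
      rw [EReal.coe_le_coe_iff] at h3
      have h4 : (w - z) x = q0 x := by
        simp [hw]
      rw [h4] at h3
      rw [hs0, mul_zero, add_zero] at hxside
      linarith
    · -- s < 0
      set σ := -s with hσ
      have hσpos : 0 < σ := by simp [hσ]; linarith
      set w := σ⁻¹ • q0 with hw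
      have hfw : fenchel f w ≤ ((u / σ : ℝ) : EReal) := by
        refine iSup_le fun v => ?_
        rcases eq_or_ne (f v) ⊤ with htop | hne
        · rw [htop, coe_sub_top']
          exact bot_le
        · obtain ⟨rv, hrv⟩ : ∃ rv : ℝ, f v = (rv : EReal) :=
            ⟨(f v).toReal, (EReal.coe_toReal hne (hne_bot v)).symm⟩
          rw [hrv, ← EReal.coe_sub, EReal.coe_le_coe_iff]
          have h2 := hdom v rv hrv
          have hwv : w v = σ⁻¹ * q0 v := rfl
          rw [hwv]
          have hq : q0 v - σ * rv < u := by
            have hrvσ : rv * s = -(σ * rv) := by rw [hσ]; ring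
            linarith
          rw [div_eq_mul_inv, ← sub_nonneg]
          have hexp : u * σ⁻¹ - (σ⁻¹ * q0 v - rv) = (u - (q0 v - σ * rv)) * σ⁻¹ := by
            field_simp
          rw [hexp]
          exact mul_nonneg (by linarith) (by positivity)
      have h3 := (hx w).trans hfw
      rw [EReal.coe_le_coe_iff] at h3
      have h4 : (w - z) x = σ⁻¹ * q0 x - z x := by
        simp [hw, ContinuousLinearMap.smul_apply, smul_eq_mul]
      rw [h4] at h3
      -- from hxside : u < q0 x + μ * s = q0 x - μ * σ
      have h5 : u / σ < σ⁻¹ * q0 x - μ := by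
        rw [div_eq_mul_inv, ← sub_pos]
        have hexp : σ⁻¹ * q0 x - μ - u * σ⁻¹ = (q0 x - μ * σ - u) * σ⁻¹ := by
          field_simp
        rw [hexp]
        have hlt : u < q0 x - μ * σ := by
          have hμσ : μ * s = -(μ * σ) := by rw [hσ]; ring
          linarith
        exact mul_pos (by linarith) (by positivity)
      rw [hμ] at h5
      linarith
  -- Step B
  have hfxne : f x ≠ ⊤ := ne_top_of_le_ne_top (EReal.coe_ne_top _) hstepA
  refine ⟨hfxne, fun v => ?_⟩
  rcases eq_or_ne (f v) ⊤ with htop | hne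
  · rw [htop]; exact le_top
  · obtain ⟨rv, hrv⟩ : ∃ rv : ℝ, f v = (rv : EReal) :=
      ⟨(f v).toReal, (EReal.coe_toReal hne (hne_bot v)).symm⟩
    have h1 := hterm v rv hrv
    rw [hrv]
    calc f x + ((z (v - x) : ℝ) : EReal) ≤ ((μ : ℝ) : EReal) + ((z (v - x) : ℝ) : EReal) :=
          add_le_add hstepA le_rfl
      _ = ((μ + z (v - x) : ℝ) : EReal) := by rw [EReal.coe_add]
      _ ≤ (rv : EReal) := by
          rw [EReal.coe_le_coe_iff]
          have : z (v - x) = z v - z x := map_sub _ _ _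
          rw [this, hμ]
          linarith


end AuxLemmas

set_option maxHeartbeats 1000000 in
/-- Let `X` be a reflexive Banach space, `f ∈ Γ(X)`, `ȳ* ∈ ∂f(x̄)`. Then `∂f`
has the isolated calmness property at `x̄` for `ȳ*` iff the conjugate quadratic growth
condition `f*(y*) ≥ f*(ȳ*) + ⟨y* - ȳ*, x̄⟩ + c·‖y* - ȳ*‖²` holds for some `c > 0` on some
neighborhood of `ȳ*`. Specifically, isolated calmness with constant `κ` yields the growth
condition for every `0 < c < 1/(4κ)`, and the growth condition with constant `c` yields
isolated calmness with constant `1/c`. -/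
theorem stmt_13 {X : Type*} [NormedAddCommGroup X] [NormedSpace ℝ X] [CompleteSpace X]
    (hrefl : Function.Surjective ⇑(NormedSpace.inclusionInDoubleDual ℝ X))
    (f : X → EReal)
    (hproper : ∃ x, f x ≠ ⊤) (hne_bot : ∀ x, f x ≠ ⊥)
    (hlsc : LowerSemicontinuous f)
    (hconv : ∀ x y : X, ∀ a b : ℝ, 0 ≤ a → 0 ≤ b → a + b = 1 →
      f (a • x + b • y) ≤ (a : EReal) * f x + (b : EReal) * f y)
    (xbar : X) (ybar : X →L[ℝ] ℝ) (hybar : ybar ∈ subdiff f xbar) :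
    ((∃ κ > (0 : ℝ), IsolatedCalmAt f xbar ybar κ) ↔
      (∃ c > (0 : ℝ), ConjIsolGrowth f xbar ybar c)) ∧
    (∀ κ > (0 : ℝ), IsolatedCalmAt f xbar ybar κ →
      ∀ c : ℝ, 0 < c → c < 1 / (4 * κ) → ConjIsolGrowth f xbar ybar c) ∧
    (∀ c > (0 : ℝ), ConjIsolGrowth f xbar ybar c → IsolatedCalmAt f xbar ybar (1 / c)) := by
  have hfxt : f xbar ≠ ⊤ := hybar.1
  set r : ℝ := (f xbar).toReal with hr
  have hfxbar : f xbar = (r : EReal) := (EReal.coe_toReal hfxt (hne_bot xbar)).symm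
  -- real epigraph convexity
  have hconvE : ∀ x₁ x₂ : X, ∀ t₁ t₂ a b : ℝ, f x₁ ≤ (t₁ : EReal) → f x₂ ≤ (t₂ : EReal) →
      0 ≤ a → 0 ≤ b → a + b = 1 → f (a • x₁ + b • x₂) ≤ ((a * t₁ + b * t₂ : ℝ) : EReal) := by
    intro x₁ x₂ t₁ t₂ a b h₁ h₂ ha hb hab
    have hne₁ : f x₁ ≠ ⊤ := ne_top_of_le_ne_top (EReal.coe_ne_top _) h₁
    have hne₂ : f x₂ ≠ ⊤ := ne_top_of_le_ne_top (EReal.coe_ne_top _) h₂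
    obtain ⟨r₁, hr₁⟩ : ∃ r₁ : ℝ, f x₁ = (r₁ : EReal) :=
      ⟨(f x₁).toReal, (EReal.coe_toReal hne₁ (hne_bot x₁)).symm⟩
    obtain ⟨r₂, hr₂⟩ : ∃ r₂ : ℝ, f x₂ = (r₂ : EReal) :=
      ⟨(f x₂).toReal, (EReal.coe_toReal hne₂ (hne_bot x₂)).symm⟩
    rw [hr₁, EReal.coe_le_coe_iff] at h₁
    rw [hr₂, EReal.coe_le_coe_iff] at h₂
    have hcv := hconv x₁ x₂ a b ha hb hab
    rw [hr₁, hr₂, ← EReal.coe_mul, ← EReal.coe_mul, ← EReal.coe_add] at hcv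
    refine hcv.trans ?_
    rw [EReal.coe_le_coe_iff]
    have k₁ : a * r₁ ≤ a * t₁ := mul_le_mul_of_nonneg_left h₁ ha
    have k₂ : b * r₂ ≤ b * t₂ := mul_le_mul_of_nonneg_left h₂ hb
    linarith
  have hfybar : fenchel f ybar = ((ybar xbar - r : ℝ) : EReal) :=
    fenchel_subdiff_eq f hne_bot xbar ybar hybar r hfxbar
  -- term lower bound for fenchel at xbar
  have hg_low : ∀ w : X →L[ℝ] ℝ, ((w xbar - r : ℝ) : EReal) ≤ fenchel f w := by
    intro w
    have h1 : (((w xbar : ℝ) : EReal) - f xbar) ≤ fenchel f w :=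
      le_iSup (fun v : X => (((w v : ℝ) : EReal) - f v)) xbar
    rwa [hfxbar, ← EReal.coe_sub] at h1
  -- PART 3 : growth with c implies calmness with 1/c
  have part3 : ∀ c > (0 : ℝ), ConjIsolGrowth f xbar ybar c →
      IsolatedCalmAt f xbar ybar (1 / c) := by
    rintro c hc ⟨V, hV, hgrow⟩
    refine ⟨univ, univ_mem, V, hV, ?_⟩
    rintro x - y hy hyV
    have hyt : f x ≠ ⊤ := hy.1
    set rx : ℝ := (f x).toReal with hrxd
    have hfx : f x = (rx : EReal) := (EReal.coe_toReal hyt (hne_bot x)).symm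
    have hfy : fenchel f y = ((y x - rx : ℝ) : EReal) :=
      fenchel_subdiff_eq f hne_bot x y hy rx hfx
    have hE1 := hgrow y hyV
    rw [hfybar, hfy, ← EReal.coe_add, EReal.coe_le_coe_iff] at hE1
    have hE2 : ybar x - rx ≤ ybar xbar - r := by
      have h1 : (((ybar x : ℝ) : EReal) - f x) ≤ fenchel f ybar :=
        le_iSup (fun v : X => (((ybar v : ℝ) : EReal) - f v)) x
      rwa [hfx, ← EReal.coe_sub, hfybar, EReal.coe_le_coe_iff] at h1
    have hpair : (y - ybar) (x - xbar) ≤ ‖y - ybar‖ * ‖x - xbar‖ := by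
      calc (y - ybar) (x - xbar) ≤ |(y - ybar) (x - xbar)| := le_abs_self _
        _ ≤ ‖y - ybar‖ * ‖x - xbar‖ := (y - ybar).le_opNorm (x - xbar)
    have hexp1 : (y - ybar) xbar = y xbar - ybar xbar := by
      simp [ContinuousLinearMap.sub_apply]
    have hexp2 : (y - ybar) (x - xbar) = y x - y xbar - (ybar x - ybar xbar) := by
      simp only [ContinuousLinearMap.sub_apply, map_sub]
      ring
    have hkey : c * ‖y - ybar‖ ^ 2 ≤ ‖y - ybar‖ * ‖x - xbar‖ := by
      rw [hexp1] at hE1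
      linarith [hpair, hexp2]
    rcases eq_or_lt_of_le (norm_nonneg (y - ybar)) with h0 | h0
    · rw [← h0]
      positivity
    · have h2 : c * ‖y - ybar‖ * ‖y - ybar‖ ≤ ‖x - xbar‖ * ‖y - ybar‖ := by
        nlinarith [hkey]
      have h1 : c * ‖y - ybar‖ ≤ ‖x - xbar‖ := le_of_mul_le_mul_right h2 h0
      calc ‖y - ybar‖ = (c * ‖y - ybar‖) / c := by field_simp
        _ ≤ ‖x - xbar‖ / c := by gcongr
        _ = 1 / c * ‖x - xbar‖ := by ring
  -- PART 2 : calmness with κ implies growth for every 0 < c < 1/(4κ)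
  have part2 : ∀ κ > (0 : ℝ), IsolatedCalmAt f xbar ybar κ →
      ∀ c : ℝ, 0 < c → c < 1 / (4 * κ) → ConjIsolGrowth f xbar ybar c := by
    rintro κ hκ ⟨U, hU, V, hV, hcalm⟩ c hc hclt
    obtain ⟨δU, hδU, hUb⟩ := Metric.mem_nhds_iff.mp hU
    obtain ⟨δV, hδV, hVb⟩ := Metric.mem_nhds_iff.mp hV
    set ρ := min (δV / 2) (δU / (4 * c)) with hρd
    have hρpos : 0 < ρ := lt_min (by linarith) (by positivity)
    refine ⟨Metric.ball ybar ρ, Metric.ball_mem_nhds _ hρpos, ?_⟩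
    intro y hyB
    rcases eq_or_ne y ybar with rfl | hyne
    · simp only [sub_self, ContinuousLinearMap.zero_apply, norm_zero]
      norm_num
    rcases eq_or_ne (fenchel f y) ⊤ with htop | hfyne
    · rw [htop]; exact le_top
    set ey := ‖y - ybar‖ with heyd
    have heypos : 0 < ey := by
      rw [heyd, norm_pos_iff, sub_ne_zero]
      exact hyne
    have hey_lt : ey < ρ := by
      rw [heyd, ← dist_eq_norm]
      exact Metric.mem_ball.mp hyB
    -- the tilted conjugate g
    set g : (X →L[ℝ] ℝ) → EReal := fun w => fenchel f w + ((-(w xbar) : ℝ) : EReal) with hgdef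
    have hg_ge : ∀ w, ((-r : ℝ) : EReal) ≤ g w := by
      intro w
      have h1 := add_le_add (hg_low w) (le_refl (((-(w xbar) : ℝ)) : EReal))
      rw [← EReal.coe_add] at h1
      have h2 : (w xbar - r) + (-(w xbar)) = -r := by ring
      rw [h2] at h1
      exact h1
    have hgconv : ∀ w₁ w₂ : X →L[ℝ] ℝ, ∀ t₁ t₂ a b : ℝ,
        g w₁ ≤ (t₁ : EReal) → g w₂ ≤ (t₂ : EReal) → 0 ≤ a → 0 ≤ b → a + b = 1 →
        g (a • w₁ + b • w₂) ≤ ((a * t₁ + b * t₂ : ℝ) : EReal) := by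
      intro w₁ w₂ t₁ t₂ a b h₁ h₂ ha hb hab
      simp only [hgdef] at h₁ h₂ ⊢
      rw [ereal_add_coe_le_coe_iff] at h₁ h₂ ⊢
      refine iSup_le fun v => ?_
      rcases eq_or_ne (f v) ⊤ with htop | hne
      · rw [htop, coe_sub_top']
        exact bot_le
      obtain ⟨rv, hrv⟩ : ∃ rv : ℝ, f v = (rv : EReal) :=
        ⟨(f v).toReal, (EReal.coe_toReal hne (hne_bot v)).symm⟩
      rw [hrv, ← EReal.coe_sub, EReal.coe_le_coe_iff]
      have k₁ : w₁ v - rv ≤ t₁ - -(w₁ xbar) := by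
        have hb1 : (((w₁ v : ℝ) : EReal) - f v) ≤ fenchel f w₁ :=
          le_iSup (fun u : X => (((w₁ u : ℝ) : EReal) - f u)) v
        rw [hrv, ← EReal.coe_sub] at hb1
        exact EReal.coe_le_coe_iff.mp (hb1.trans h₁)
      have k₂ : w₂ v - rv ≤ t₂ - -(w₂ xbar) := by
        have hb2 : (((w₂ v : ℝ) : EReal) - f v) ≤ fenchel f w₂ :=
          le_iSup (fun u : X => (((w₂ u : ℝ) : EReal) - f u)) v
        rw [hrv, ← EReal.coe_sub] at hb2
        exact EReal.coe_le_coe_iff.mp (hb2.trans h₂)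
      have happ1 : (a • w₁ + b • w₂) v = a * w₁ v + b * w₂ v := by
        simp [ContinuousLinearMap.add_apply, ContinuousLinearMap.smul_apply]
      have happ2 : (a • w₁ + b • w₂) xbar = a * w₁ xbar + b * w₂ xbar := by
        simp [ContinuousLinearMap.add_apply, ContinuousLinearMap.smul_apply]
      rw [happ1, happ2]
      have hk₁ := mul_le_mul_of_nonneg_left k₁ ha
      have hk₂ := mul_le_mul_of_nonneg_left k₂ hb
      have hrvab : a * rv + b * rv = rv := by rw [← add_mul, hab, one_mul]
      nlinarith [hk₁, hk₂]
    -- g y is a real number gy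
    have hfy_ne_bot : fenchel f y ≠ ⊥ :=
      (lt_of_lt_of_le (EReal.bot_lt_coe _) (hg_low y)).ne'
    obtain ⟨Fy, hFy⟩ : ∃ Fy : ℝ, fenchel f y = (Fy : EReal) :=
      ⟨(fenchel f y).toReal, (EReal.coe_toReal hfyne hfy_ne_bot).symm⟩
    set gy := Fy - y xbar with hgyd
    have hgval : g y = (gy : EReal) := by
      simp only [hgdef]
      rw [hFy, ← EReal.coe_add, EReal.coe_eq_coe_iff, hgyd]
      ring
    have hgyge : -r ≤ gy := by
      have := hg_ge y
      rw [hgval, EReal.coe_le_coe_iff] at this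
      exact this
    -- reduce the goal to a real inequality and argue by contradiction
    rw [hfybar, hFy, ← EReal.coe_add, EReal.coe_le_coe_iff]
    by_contra hcon
    push_neg at hcon
    have hsub_apply : (y - ybar) xbar = y xbar - ybar xbar := by
      simp [ContinuousLinearMap.sub_apply]
    have hgylt : gy < -r + c * ey ^ 2 := by
      rw [hsub_apply] at hcon
      rw [hgyd]
      linarith
    -- Ekeland on the truncation G of g
    set M := gy + 1 with hMd
    have hMfin : ∀ w, min (g w) ((M : ℝ) : EReal) ≠ ⊥ ∧ min (g w) ((M : ℝ) : EReal) ≠ ⊤ := by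
      intro w
      constructor
      · refine ne_of_gt (lt_min ?_ ?_)
        · exact lt_of_lt_of_le (EReal.bot_lt_coe _) (hg_ge w)
        · exact EReal.bot_lt_coe _
      · exact ne_of_lt (lt_of_le_of_lt (min_le_right _ _) (EReal.coe_lt_top M))
    set G : (X →L[ℝ] ℝ) → ℝ := fun w => (min (g w) ((M : ℝ) : EReal)).toReal with hGdef
    have hGcoe : ∀ w, ((G w : ℝ) : EReal) = min (g w) ((M : ℝ) : EReal) := by
      intro w
      exact EReal.coe_toReal (hMfin w).2 (hMfin w).1
    have hGval : ∀ (w : X →L[ℝ] ℝ) (t : ℝ), g w = (t : EReal) → t ≤ M → G w = t := by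
      intro w t hgw htM
      simp only [hGdef, hgw]
      rw [min_eq_left (by exact_mod_cast htM)]
      exact EReal.toReal_coe t
    have hGy : G y = gy := hGval y gy hgval (by rw [hMd]; linarith)
    have hGb : ∀ w, min (-r) M ≤ G w := by
      intro w
      have h1 : ((min (-r) M : ℝ) : EReal) ≤ min (g w) ((M : ℝ) : EReal) := by
        rcases le_total (-r) M with h | h
        · rw [min_eq_left h]
          exact le_min (hg_ge w) (by exact_mod_cast h)
        · rw [min_eq_right h]
          exact le_min ((EReal.coe_le_coe_iff.mpr h).trans (hg_ge w)) le_rfl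
      rw [← hGcoe w, EReal.coe_le_coe_iff] at h1
      exact h1
    have hGlsc : LowerSemicontinuous G := by
      intro w₀ t ht
      have h1 : (t : EReal) < min (g w₀) ((M : ℝ) : EReal) := by
        rw [← hGcoe w₀]
        exact_mod_cast ht
      have h2 : (t : EReal) < g w₀ := h1.trans_le (min_le_left _ _)
      have h3 : t < M := by
        have := h1.trans_le (min_le_right _ _)
        exact_mod_cast this
      simp only [hgdef] at h2
      rw [coe_lt_ereal_add_coe_iff] at h2
      have h2' : ((t - -(w₀ xbar) : ℝ) : EReal) < ⨆ v : X, (((w₀ v : ℝ) : EReal) - f v) := h2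
      rw [lt_iSup_iff] at h2'
      obtain ⟨v, hv⟩ := h2'
      have hfvt : f v ≠ ⊤ := by
        intro htop
        rw [htop, coe_sub_top'] at hv
        exact absurd hv (not_lt_bot)
      obtain ⟨rv, hrv⟩ : ∃ rv : ℝ, f v = (rv : EReal) :=
        ⟨(f v).toReal, (EReal.coe_toReal hfvt (hne_bot v)).symm⟩
      rw [hrv, ← EReal.coe_sub, EReal.coe_lt_coe_iff] at hv
      have hcont : Continuous fun w : X →L[ℝ] ℝ => w v - rv - w xbar := by
        refine Continuous.sub (Continuous.sub ?_ continuous_const) ?_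
        · exact (ContinuousLinearMap.apply ℝ ℝ v).continuous
        · exact (ContinuousLinearMap.apply ℝ ℝ xbar).continuous
      have hopen : IsOpen {w : X →L[ℝ] ℝ | t < w v - rv - w xbar} :=
        isOpen_lt continuous_const hcont
      have hev : ∀ᶠ w in 𝓝 w₀, t < w v - rv - w xbar := by
        refine hopen.mem_nhds ?_
        simp only [mem_setOf_eq]
        linarith
      filter_upwards [hev] with w hw
      have h4 : (t : EReal) < min (g w) ((M : ℝ) : EReal) := by
        refine lt_min ?_ (by exact_mod_cast h3)
        have k1 : (((w v : ℝ) : EReal) - f v) ≤ fenchel f w :=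
          le_iSup (fun u : X => (((w u : ℝ) : EReal) - f u)) v
        rw [hrv, ← EReal.coe_sub] at k1
        have k2 := add_le_add k1 (le_refl (((-(w xbar) : ℝ)) : EReal))
        rw [← EReal.coe_add] at k2
        simp only [hgdef]
        refine lt_of_lt_of_le ?_ k2
        exact_mod_cast (by linarith : t < (w v - rv) + (-(w xbar)))
      rw [← hGcoe w] at h4
      exact_mod_cast h4
    obtain ⟨z, hz1, hz2, hz3⟩ := myEkeland G hGlsc (min (-r) M) hGb y (2 * c * ey)
      (by positivity)
    rw [hGy] at hz1 hz2
    -- g z is real and equals G z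
    set gz := G z with hgzd
    have hglt : g z < ((M : ℝ) : EReal) := by
      by_contra hge
      push_neg at hge
      have := hGcoe z
      rw [min_eq_right hge] at this
      have hMgz : gz = M := by exact_mod_cast this
      rw [hMd] at hMgz
      linarith
    have hgzeq : g z = (gz : EReal) := by
      have := hGcoe z
      rw [min_eq_left hglt.le] at this
      exact this.symm
    have hgzge : -r ≤ gz := by
      have := hg_ge z
      rw [hgzeq, EReal.coe_le_coe_iff] at this
      exact this
    -- approximate minimality of z for g
    have hmin : ∀ w, ((gz - (2 * c * ey) * ‖w - z‖ : ℝ) : EReal) ≤ g w := by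
      intro w
      rcases le_or_gt ((M : ℝ) : EReal) (g w) with h | h
      · refine le_trans ?_ h
        rw [EReal.coe_le_coe_iff]
        have hn : (0:ℝ) ≤ 2 * c * ey * ‖w - z‖ := by positivity
        rw [hMd]
        linarith
      · have := hGcoe w
        rw [min_eq_left h.le] at this
        rw [← this, EReal.coe_le_coe_iff]
        have h5 := hz3 w
        rw [dist_eq_norm] at h5
        linarith
    obtain ⟨p, hpnorm, hpsub⟩ := exists_subgrad g hgconv z gz (2 * c * ey) hgzeq
      (by positivity) hmin
    obtain ⟨u, hu⟩ := hrefl p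
    have hueq : ∀ w : X →L[ℝ] ℝ, p w = w u := by
      intro w
      rw [← hu]
      exact NormedSpace.dual_def ℝ X u w
    have hunorm : ‖u‖ ≤ 2 * c * ey := by
      apply NormedSpace.norm_le_dual_bound ℝ u (by positivity)
      intro w
      rw [← hueq w]
      calc ‖p w‖ ≤ ‖p‖ * ‖w‖ := p.le_opNorm w
        _ ≤ 2 * c * ey * ‖w‖ := mul_le_mul_of_nonneg_right hpnorm (norm_nonneg w)
    -- z is a subgradient of f at xbar + u
    have hfzval : fenchel f z = ((gz + z xbar : ℝ) : EReal) := by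
      have h1 : fenchel f z + ((-(z xbar) : ℝ) : EReal) = (gz : EReal) := hgzeq
      rw [ereal_add_coe_eq_coe_iff] at h1
      rw [h1, EReal.coe_eq_coe_iff]
      ring
    have hfmhyp : ∀ w : X →L[ℝ] ℝ,
        (((gz + z xbar) + (w - z) (xbar + u) : ℝ) : EReal) ≤ fenchel f w := by
      intro w
      have h1 := hpsub w
      simp only [hgdef] at h1
      rw [coe_le_ereal_add_coe_iff] at h1
      refine le_trans (le_of_eq ?_) h1
      rw [EReal.coe_eq_coe_iff]
      have h2 : p (w - z) = (w - z) u := hueq (w - z)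
      simp only [h2, ContinuousLinearMap.sub_apply, map_add]
      ring
    have hzsub : z ∈ subdiff f (xbar + u) :=
      fm_subdiff f hproper hne_bot hlsc hconvE z (gz + z xbar) hfzval (xbar + u) hfmhyp
    -- apply calmness
    have hxU : xbar + u ∈ U := by
      apply hUb
      rw [Metric.mem_ball, dist_eq_norm]
      simp only [add_sub_cancel_left]
      have hρle : ρ ≤ δU / (4 * c) := min_le_right _ _
      have h1 : 2 * c * ey < 2 * c * ρ := by
        apply mul_lt_mul_of_pos_left hey_lt (by positivity)
      have h2 : 2 * c * ρ ≤ 2 * c * (δU / (4 * c)) :=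
        mul_le_mul_of_nonneg_left hρle (by positivity)
      have h3 : 2 * c * (δU / (4 * c)) = δU / 2 := by
        field_simp
        ring
      linarith
    have hzdist : dist z y ≤ ey / 2 := by
      have h1 : gy - gz ≤ c * ey ^ 2 := by linarith
      nlinarith [hz2, h1, heypos, hc, dist_nonneg (x := z) (y := y)]
    have hzV : z ∈ V := by
      apply hVb
      rw [Metric.mem_ball]
      have hρle : ρ ≤ δV / 2 := min_le_left _ _
      calc dist z ybar ≤ dist z y + dist y ybar := dist_triangle _ _ _
        _ ≤ ey / 2 + ey := by
            have hd2 : dist y ybar = ey := by rw [heyd, dist_eq_norm]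
            rw [hd2]
            linarith [hzdist]
        _ < δV := by linarith
    have hfinal := hcalm (xbar + u) hxU z hzsub hzV
    rw [show xbar + u - xbar = u by abel] at hfinal
    have hzlow : ey / 2 ≤ ‖z - ybar‖ := by
      have h1 : dist y ybar ≤ dist y z + dist z ybar := dist_triangle _ _ _
      rw [dist_eq_norm, ← heyd, dist_eq_norm, dist_eq_norm] at h1
      rw [dist_comm, dist_eq_norm] at hzdist
      linarith
    have hup : ‖z - ybar‖ ≤ κ * (2 * c * ey) :=
      hfinal.trans (mul_le_mul_of_nonneg_left hunorm hκ.le)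
    rw [lt_div_iff₀ (by positivity)] at hclt
    nlinarith [hzlow, hup, heypos, hκ, hc]
  refine ⟨?_, part2, part3⟩
  constructor
  · rintro ⟨κ, hκ, hcalm⟩
    refine ⟨1 / (8 * κ), by positivity, part2 κ hκ hcalm _ (by positivity) ?_⟩
    rw [div_lt_div_iff₀ (by positivity) (by positivity)]
    nlinarith
  · rintro ⟨c, hc, hgrow⟩
    exact ⟨1 / c, by positivity, part3 c hc hgrow⟩
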